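/- For x > 0, a loan α belongs to S_x if and only if −α(0) = Σ_{k≥1} α(k)/(1 + xk). -/

import Mathlib

/-- The elementary loan `-1 + (1+mx)·yᵐ` of maturity `m`, simple interest rate `x`. -/
noncomputable def elemLoan (x : ℝ) (m : ℕ) : Polynomial ℝ :=
  Polynomial.C (1 + m * x) * Polynomial.X ^ m - 1

/-- The convex cone generated by the elementary loans of simple interest rate `x`:
the set of conical combinations of the `elemLoan x m`, `m ≥ 1`. -/
noncomputable def Sx (x : ℝ) : Set (Polynomial ℝ) :=
  {α | ∃ (n : ℕ) (c : Fin n → ℝ) (m : Fin n → ℕ), 0 < n ∧ (∀ k, 0 < c k) ∧ (∀ k, 1 ≤ m k) ∧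
    α = ∑ k, c k • elemLoan x (m k)}

/-- A loan: negative principal at time 0, nonnegative installments whose sum is at
least the principal. -/
def IsLoan (α : Polynomial ℝ) : Prop :=
  α.coeff 0 < 0 ∧ (∀ k ≥ 1, 0 ≤ α.coeff k) ∧
    -α.coeff 0 ≤ ∑ k ∈ Finset.Icc 1 α.natDegree, α.coeff k

lemma elemLoan_coeff (x : ℝ) (m N : ℕ) :
    (elemLoan x m).coeff N =
      (1 + m * x) * (if N = m then 1 else 0) - (if N = 0 then 1 else 0) := by
  rw [elemLoan, Polynomial.coeff_sub, Polynomial.coeff_C_mul, Polynomial.coeff_X_pow,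
    Polynomial.coeff_one]

theorem mem_sx_iff (x : ℝ) (hx : 0 < x) (α : Polynomial ℝ) (hα : IsLoan α) :
    α ∈ Sx x ↔ -α.coeff 0 = ∑ k ∈ Finset.Icc 1 α.natDegree, α.coeff k / (1 + x * k) := by
  obtain ⟨h0, hpos, hsum⟩ := hα
  constructor
  · rintro ⟨n, c, m, hn, hc, hm, rfl⟩
    set β : Polynomial ℝ := ∑ k : Fin n, c k • elemLoan x (m k) with hβ
    have coeff0 : β.coeff 0 = -∑ k : Fin n, c k := by
      rw [hβ, Polynomial.finset_sum_coeff, ← Finset.sum_neg_distrib]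
      refine Finset.sum_congr rfl fun k _ => ?_
      have hk : ¬ ((0:ℕ) = m k) := by have := hm k; omega
      rw [Polynomial.coeff_smul, elemLoan_coeff, smul_eq_mul]
      simp [hk]
    have coeffN : ∀ N : ℕ, 1 ≤ N → β.coeff N
        = ∑ k : Fin n, (if N = m k then c k * (1 + x * N) else 0) := by
      intro N hN
      rw [hβ, Polynomial.finset_sum_coeff]
      refine Finset.sum_congr rfl fun k _ => ?_
      rw [Polynomial.coeff_smul, elemLoan_coeff, smul_eq_mul]
      have hN0 : ¬ (N = 0) := by omega
      by_cases hNm : N = m k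
      · subst hNm
        rw [if_pos rfl, if_pos rfl, if_neg hN0]
        ring
      · simp [hNm, hN0]
    have hcoeffpos : ∀ j : Fin n, 0 < β.coeff (m j) := by
      intro j
      rw [coeffN (m j) (hm j)]
      apply Finset.sum_pos'
      · intro i _
        split_ifs
        · exact le_of_lt (mul_pos (hc i) (by positivity))
        · exact le_refl 0
      · exact ⟨j, Finset.mem_univ j, by rw [if_pos rfl]; exact mul_pos (hc j) (by positivity)⟩
    have hmle : ∀ k, m k ≤ β.natDegree := fun k =>
      Polynomial.le_natDegree_of_ne_zero (ne_of_gt (hcoeffpos k))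
    rw [coeff0, neg_neg]
    have step1 : ∑ j ∈ Finset.Icc 1 β.natDegree, β.coeff j / (1 + x * j)
        = ∑ j ∈ Finset.Icc 1 β.natDegree, ∑ k : Fin n, (if j = m k then c k else 0) := by
      refine Finset.sum_congr rfl fun j hj => ?_
      obtain ⟨hj1, _⟩ := Finset.mem_Icc.mp hj
      rw [coeffN j hj1, Finset.sum_div]
      refine Finset.sum_congr rfl fun k _ => ?_
      have hne : (1:ℝ) + x * j ≠ 0 := by positivity
      split_ifs
      · rw [mul_div_assoc, div_self hne, mul_one]
      · simp
    rw [step1, Finset.sum_comm]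
    symm
    refine Finset.sum_congr rfl fun k _ => ?_
    rw [Finset.sum_ite_eq' (Finset.Icc 1 β.natDegree) (m k) (fun _ => c k),
      if_pos (Finset.mem_Icc.mpr ⟨hm k, hmle k⟩)]
  · intro h
    set D := α.natDegree with hD
    set S : Finset ℕ := (Finset.Icc 1 D).filter (fun j => α.coeff j ≠ 0) with hS
    have hsum_eq : ∑ j ∈ S, α.coeff j / (1 + x * j)
        = ∑ j ∈ Finset.Icc 1 D, α.coeff j / (1 + x * j) := by
      apply Finset.sum_filter_of_ne
      intro j _ hfj hcj
      exact hfj (by simp [hcj])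
    have hSne : S.Nonempty := by
      by_contra hne
      rw [Finset.not_nonempty_iff_eq_empty] at hne
      rw [← hsum_eq, hne, Finset.sum_empty] at h
      linarith
    have hSmem : ∀ j ∈ S, 1 ≤ j ∧ j ≤ D ∧ 0 < α.coeff j := by
      intro j hj
      obtain ⟨hj', hj2⟩ := Finset.mem_filter.mp hj
      obtain ⟨hj1, hjD⟩ := Finset.mem_Icc.mp hj'
      exact ⟨hj1, hjD, lt_of_le_of_ne (hpos j hj1) (Ne.symm hj2)⟩
    have main : α = ∑ j ∈ S, (α.coeff j / (1 + x * j)) • elemLoan x j := by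
      ext N
      rw [Polynomial.finset_sum_coeff]
      by_cases hN : N = 0
      · subst hN
        have hterm : ∀ j ∈ S, ((α.coeff j / (1 + x * j)) • elemLoan x j).coeff 0
            = -(α.coeff j / (1 + x * j)) := by
          intro j hj
          obtain ⟨hj1, _, _⟩ := hSmem j hj
          rw [Polynomial.coeff_smul, elemLoan_coeff, smul_eq_mul]
          have : ¬ ((0:ℕ) = j) := by omega
          simp [this]
        rw [Finset.sum_congr rfl hterm, Finset.sum_neg_distrib, hsum_eq, ← h, neg_neg]
      · have hterm : ∀ j ∈ S, ((α.coeff j / (1 + x * j)) • elemLoan x j).coeff N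
            = if N = j then α.coeff j else 0 := by
          intro j hj
          rw [Polynomial.coeff_smul, elemLoan_coeff, smul_eq_mul]
          by_cases hNj : N = j
          · subst hNj
            rw [if_pos rfl, if_pos rfl, if_neg hN]
            have hne : (1:ℝ) + x * N ≠ 0 := by positivity
            rw [mul_one, sub_zero, show (1:ℝ) + ↑N * x = 1 + x * ↑N from by ring,
              div_mul_cancel₀ _ hne]
          · simp [hNj, hN]
        rw [Finset.sum_congr rfl hterm, Finset.sum_ite_eq S N (fun j => α.coeff j)]
        by_cases hNS : N ∈ S
        · rw [if_pos hNS]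
        · rw [if_neg hNS]
          by_cases hND : N ∈ Finset.Icc 1 D
          · by_contra hne
            exact hNS (Finset.mem_filter.mpr ⟨hND, hne⟩)
          · have : D < N := by
              simp only [Finset.mem_Icc, not_and, not_le] at hND
              omega
            exact Polynomial.coeff_eq_zero_of_natDegree_lt this
    refine ⟨S.card, fun k => α.coeff ((S.equivFin.symm k : ℕ)) / (1 + x * ((S.equivFin.symm k : ℕ))),
      fun k => (S.equivFin.symm k : ℕ), Finset.card_pos.mpr hSne, ?_, ?_, ?_⟩
    · intro k
      obtain ⟨h1, _, h3⟩ := hSmem _ (S.equivFin.symm k).2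
      exact div_pos h3 (by positivity)
    · intro k
      exact (hSmem _ (S.equivFin.symm k).2).1
    · have key : ∑ k : Fin S.card,
          (fun j : ℕ => (α.coeff j / (1 + x * j)) • elemLoan x j) ((S.equivFin.symm k : ℕ))
          = ∑ j ∈ S, (α.coeff j / (1 + x * j)) • elemLoan x j := by
        rw [← Finset.sum_coe_sort S (fun j => (α.coeff j / (1 + x * j)) • elemLoan x j)]
        exact Equiv.sum_comp S.equivFin.symm
          (fun j : S => (α.coeff (j:ℕ) / (1 + x * (j:ℕ))) • elemLoan x (j:ℕ))
      exact main.trans key.symm
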